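/- Fix U ∈ ℝ^{m×ℓ}. A matrix X ∈ ℝ^{m×m} is symmetric positive semidefinite with range(X) ⊆ range(U) (as linear maps ℝ^m → ℝ^m and ℝ^ℓ → ℝ^m given by matrix multiplication) if and only if X = U X̂ Uᵗ for some symmetric positive semidefinite matrix X̂ ∈ ℝ^{ℓ×ℓ}. -/

import Mathlib

open Matrix

lemma lift_of_range_le {m l n : ℕ} (U : Matrix (Fin m) (Fin l) ℝ)
    (A : Matrix (Fin m) (Fin n) ℝ)
    (h : LinearMap.range A.mulVecLin ≤ LinearMap.range U.mulVecLin) :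
    ∃ C : Matrix (Fin l) (Fin n) ℝ, A = U * C := by
  have hj : ∀ j : Fin n, ∃ c : Fin l → ℝ, U *ᵥ c = A *ᵥ Pi.single j 1 := by
    intro j
    exact h ⟨Pi.single j 1, rfl⟩
  choose c hc using hj
  refine ⟨Matrix.of fun i j => c j i, ?_⟩
  ext i j
  have := congrFun (hc j) i
  rw [Matrix.mul_apply]
  simp only [Matrix.mulVec, dotProduct, Pi.single_apply, mul_ite, mul_one, mul_zero,
    Finset.sum_ite_eq', Finset.mem_univ, if_true] at this
  exact this.symm

theorem facial_reduction_range_factorization (m l : ℕ)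
    (U : Matrix (Fin m) (Fin l) ℝ) (X : Matrix (Fin m) (Fin m) ℝ) :
    (X.PosSemidef ∧ LinearMap.range X.mulVecLin ≤ LinearMap.range U.mulVecLin) ↔
    (∃ Xhat : Matrix (Fin l) (Fin l) ℝ, Xhat.PosSemidef ∧ X = U * Xhat * Uᵀ) := by
  constructor
  · rintro ⟨hX, hr⟩
    obtain ⟨S, hS, hSS⟩ : ∃ S : Matrix (Fin m) (Fin m) ℝ, S.PosSemidef ∧ S * S = X := by
      open scoped MatrixOrder in
      exact ⟨CFC.sqrt X, (CFC.sqrt_nonneg X).posSemidef, CFC.sqrt_mul_sqrt_self X hX.nonneg⟩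
    have hSh : Sᴴ = S := hS.1
    -- range X ≤ range S
    have hXS : LinearMap.range X.mulVecLin ≤ LinearMap.range S.mulVecLin := by
      rintro x ⟨v, rfl⟩
      exact ⟨S *ᵥ v, by rw [← hSS]; simp [Matrix.mulVec_mulVec]⟩
    -- ranks equal
    have hrank : X.rank = S.rank := by
      have h := Matrix.rank_self_mul_conjTranspose S
      rw [hSh, hSS] at h
      exact h
    have heq : LinearMap.range X.mulVecLin = LinearMap.range S.mulVecLin := by
      apply Submodule.eq_of_le_of_finrank_eq hXS
      rw [Matrix.rank, Matrix.rank] at hrank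
      exact hrank
    have hrS : LinearMap.range S.mulVecLin ≤ LinearMap.range U.mulVecLin := heq ▸ hr
    obtain ⟨C, hC⟩ := lift_of_range_le U S hrS
    refine ⟨C * Cᵀ, ?_, ?_⟩
    · have : (C * Cᴴ).PosSemidef := Matrix.posSemidef_self_mul_conjTranspose C
      simpa using this
    · have hST : Sᵀ = S := by
        have := hSh
        rwa [Matrix.conjTranspose_eq_transpose_of_trivial] at this
      calc X = S * Sᵀ := by rw [hST, hSS]
        _ = (U * C) * (U * C)ᵀ := by rw [← hC]
        _ = U * (C * Cᵀ) * Uᵀ := by rw [Matrix.transpose_mul]; simp only [Matrix.mul_assoc]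
  · rintro ⟨Xhat, hXhat, rfl⟩
    constructor
    · have : (U * Xhat * Uᴴ).PosSemidef := hXhat.mul_mul_conjTranspose_same U
      simpa using this
    · rintro x ⟨v, rfl⟩
      exact ⟨(Xhat * Uᵀ) *ᵥ v, by
        rw [Matrix.mulVecLin_apply, Matrix.mulVec_mulVec, ← Matrix.mul_assoc,
          Matrix.mulVecLin_apply]⟩
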